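/- For real p with p ≠ 1/2, p ≠ 0, p ≠ 1, x = p(1-p), g_i(p) = (1-p)^i - p^i, and any integer m ≥ 2: Σ_{i=1}^{m-1} x^{m-i-1} g_i(p)^2 = (x^{m-1}(1-2m)·g_1(p) + g_{2m-1}(p))/g_1(p). -/

import Mathlib

/-- Σ_{i=1}^{m-1} x^{m-i-1} g_i(p)^2 = (x^{m-1}(1-2m) g_1(p) + g_{2m-1}(p))/g_1(p). -/
theorem sum_g_sq (p : ℝ) (hp : p ≠ 1 / 2) (hp0 : p ≠ 0) (hp1 : p ≠ 1) (m : ℕ) (hm : 2 ≤ m) :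
    ∑ i ∈ Finset.Icc 1 (m - 1),
        (p * (1 - p)) ^ (m - i - 1) * ((1 - p) ^ i - p ^ i) ^ 2 =
      ((p * (1 - p)) ^ (m - 1) * (1 - 2 * (m : ℝ)) * ((1 - p) ^ 1 - p ^ 1) +
          ((1 - p) ^ (2 * m - 1) - p ^ (2 * m - 1))) / ((1 - p) ^ 1 - p ^ 1) := by
  have hg : 1 - 2 * p ≠ 0 := by
    intro h; apply hp; linarith
  have hd : (1 - p) ^ 1 - p ^ 1 = 1 - 2 * p := by ring
  obtain ⟨k, rfl⟩ := Nat.exists_eq_add_of_le hm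
  induction k with
  | zero =>
    rw [hd]
    norm_num
    field_simp [show (1:ℝ) - p * 2 ≠ 0 by contrapose! hg; linarith]
    ring
  | succ k ih =>
    have h1 : 2 + (k + 1) - 1 = (k + 1) + 1 := by omega
    have h2 : 2 + k - 1 = k + 1 := by omega
    rw [h1, Finset.sum_Icc_succ_top (by omega : 1 ≤ k + 1 + 1)]
    have hsum : ∑ i ∈ Finset.Icc 1 (k + 1),
        (p * (1 - p)) ^ (2 + (k + 1) - i - 1) * ((1 - p) ^ i - p ^ i) ^ 2
        = (p * (1 - p)) * ∑ i ∈ Finset.Icc 1 (k + 1),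
            (p * (1 - p)) ^ (2 + k - i - 1) * ((1 - p) ^ i - p ^ i) ^ 2 := by
      rw [Finset.mul_sum]
      apply Finset.sum_congr rfl
      intro i hi
      simp only [Finset.mem_Icc] at hi
      have : 2 + (k + 1) - i - 1 = (2 + k - i - 1) + 1 := by omega
      rw [this, pow_succ]
      ring
    rw [h2] at ih
    rw [hsum, ih (by omega)]
    have e1 : 2 * (2 + k) - 1 = 2 * k + 3 := by omega
    have e2 : 2 * (2 + (k + 1)) - 1 = 2 * k + 5 := by omega
    have h3 : 2 + (k + 1) - (k + 1 + 1) - 1 = 0 := by omega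
    rw [e1, e2, h3, hd]
    simp only [mul_pow]
    push_cast
    field_simp [show (1:ℝ) - p * 2 ≠ 0 by contrapose! hg; linarith]
    ring
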